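/- Let λ > 0 and Q_t > Q_h > 0 be real numbers, and define w(Γ) = exp(−Γ·(Q_t − Q_h)/λ)·(Γ·Q_t + λ)/(Γ·Q_h + λ) for Γ ≥ 0. Then w is strictly decreasing on [0, ∞); that is, the liquidity market share of the low-fee pool strictly decreases in the gas cost Γ. -/

import Mathlib

/-- Proposition 2: the liquidity market share of the low-fee pool,
`w(Γ) = exp(−Γ·(Q_t − Q_h)/λ)·(Γ·Q_t + λ)/(Γ·Q_h + λ)`, is strictly decreasing in the
gas cost `Γ` on `[0, ∞)`. -/
theorem low_fee_market_share_strictAnti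
    (lam Qt Qh : ℝ) (hlam : 0 < lam) (hQh : 0 < Qh) (hQ : Qh < Qt) :
    StrictAntiOn
      (fun Γ : ℝ => Real.exp (-Γ * (Qt - Qh) / lam) * (Γ * Qt + lam) / (Γ * Qh + lam))
      (Set.Ici 0) := by
  have hQt : 0 < Qt := lt_trans hQh hQ
  apply strictAntiOn_of_deriv_neg (convex_Ici 0)
  · apply ContinuousOn.div
    · exact ((Real.continuous_exp.comp (by continuity)).mul (by continuity)).continuousOn
    · exact ((continuous_id.mul continuous_const).add continuous_const).continuousOn
    · intro x hx
      have : (0:ℝ) ≤ x := hx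
      nlinarith
  · intro x hx
    rw [interior_Ici] at hx
    have hx0 : (0:ℝ) < x := hx
    have hd : x * Qh + lam ≠ 0 := by nlinarith
    have h1 : HasDerivAt (fun Γ : ℝ => -Γ * (Qt - Qh) / lam) (-(Qt - Qh) / lam) x := by
      have := (((hasDerivAt_id x).neg.mul_const (Qt - Qh)).div_const lam)
      simpa using this
    have h2 := h1.exp
    have h3 : HasDerivAt (fun Γ : ℝ => Γ * Qt + lam) Qt x := by
      simpa using ((hasDerivAt_id x).mul_const Qt).add_const lam
    have h4 : HasDerivAt (fun Γ : ℝ => Γ * Qh + lam) Qh x := by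
      simpa using ((hasDerivAt_id x).mul_const Qh).add_const lam
    have h5 := (h2.mul h3).div h4 hd
    rw [show deriv (fun Γ : ℝ => Real.exp (-Γ * (Qt - Qh) / lam) * (Γ * Qt + lam) / (Γ * Qh + lam)) x = _ from h5.deriv]
    apply div_neg_of_neg_of_pos
    · have hE : 0 < Real.exp (-x * (Qt - Qh) / lam) := Real.exp_pos _
      have key : (-(Qt - Qh) * (x * Qt + lam) + lam * Qt) * (x * Qh + lam)
          - lam * ((x * Qt + lam) * Qh) < 0 := by
        have heq : (-(Qt - Qh) * (x * Qt + lam) + lam * Qt) * (x * Qh + lam)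
            - lam * ((x * Qt + lam) * Qh)
            = -((Qt - Qh) * (x * x * Qt * Qh + x * lam * Qt + x * lam * Qh)) := by ring
        rw [heq, neg_lt_zero]
        have h1' : 0 < Qt - Qh := sub_pos.mpr hQ
        have h2' : 0 < x * x * Qt * Qh + x * lam * Qt + x * lam * Qh := by positivity
        exact mul_pos h1' h2'
      have hB : (-(Qt - Qh) / lam * (x * Qt + lam) + Qt) * (x * Qh + lam)
          - (x * Qt + lam) * Qh < 0 := by
        have heq : lam * ((-(Qt - Qh) / lam * (x * Qt + lam) + Qt) * (x * Qh + lam)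
            - (x * Qt + lam) * Qh)
            = (-(Qt - Qh) * (x * Qt + lam) + lam * Qt) * (x * Qh + lam)
              - lam * ((x * Qt + lam) * Qh) := by
          field_simp
        by_contra hcon
        push_neg at hcon
        nlinarith [mul_nonneg hlam.le hcon]
      calc (Real.exp (-x * (Qt - Qh) / lam) * (-(Qt - Qh) / lam) * (x * Qt + lam)
            + Real.exp (-x * (Qt - Qh) / lam) * Qt) * (x * Qh + lam)
            - Real.exp (-x * (Qt - Qh) / lam) * (x * Qt + lam) * Qh
          = Real.exp (-x * (Qt - Qh) / lam)
            * ((-(Qt - Qh) / lam * (x * Qt + lam) + Qt) * (x * Qh + lam)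
              - (x * Qt + lam) * Qh) := by ring
        _ < 0 := mul_neg_of_pos_of_neg hE hB
    · positivity
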